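/- Suppose k and the resolvent r are summable, x is the solution of the Volterra summation equation, and φ : [0,∞) → [0,∞) is an increasing, convex, and O-regularly varying function. Then limsup_{n→∞} (1/n) Σ_{j=0}^n φ(|x(j)|) < ∞ if and only if limsup_{n→∞} (1/n) Σ_{j=0}^n φ(|H(j)|) < ∞. -/

import Mathlib

open Filter Finset

/-- `r` is the resolvent of the kernel `k`:
`r(0) = 1` and `r(n+1) = Σ_{j=0}^n k(n−j) r(j)`. -/
def IsResolvent (k r : ℕ → ℝ) : Prop :=
  r 0 = 1 ∧ ∀ n : ℕ, r (n + 1) = ∑ j ∈ Finset.range (n + 1), k (n - j) * r j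

/-- `x` solves the Volterra summation equation
`x(n+1) = Σ_{j=0}^n k(n−j) x(j) + H(n+1)`. -/
def IsVolterraSol (k H x : ℕ → ℝ) : Prop :=
  ∀ n : ℕ, x (n + 1) = (∑ j ∈ Finset.range (n + 1), k (n - j) * x j) + H (n + 1)

/-- `φ` is O-regularly varying at infinity:
`0 < liminf_{t→∞} φ(λt)/φ(t) ≤ limsup_{t→∞} φ(λt)/φ(t) < ∞` for each `λ > 1`. -/
def ORegVarying (φ : ℝ → ℝ) : Prop :=
  ∀ lam : ℝ, 1 < lam →
    (0 : EReal) < Filter.liminf (fun t : ℝ => ((φ (lam * t) / φ t : ℝ) : EReal)) atTop ∧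
    Filter.limsup (fun t : ℝ => ((φ (lam * t) / φ t : ℝ) : EReal)) atTop < ⊤

private lemma tri_swap (F : ℕ → ℕ → ℝ) (N : ℕ) :
    ∑ n ∈ range N, ∑ j ∈ range (n + 1), F n j
      = ∑ j ∈ range N, ∑ n ∈ Finset.Ico j N, F n j := by
  induction N with
  | zero => simp
  | succ N ih =>
    rw [Finset.sum_range_succ, ih]
    have e1 : ∑ j ∈ range (N + 1), ∑ n ∈ Finset.Ico j (N + 1), F n j
        = ∑ j ∈ range (N + 1), ((∑ n ∈ Finset.Ico j N, F n j) + F N j) := by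
      refine Finset.sum_congr rfl fun j hj => ?_
      exact Finset.sum_Ico_succ_top (by have := Finset.mem_range.mp hj; omega) _
    rw [e1, Finset.sum_add_distrib, Finset.sum_range_succ
      (f := fun j => ∑ n ∈ Finset.Ico j N, F n j)]
    simp

private lemma tri_swap' (F : ℕ → ℕ → ℝ) (N : ℕ) :
    ∑ n ∈ range N, ∑ j ∈ range n, F n j
      = ∑ j ∈ range N, ∑ n ∈ Finset.Ico (j + 1) N, F n j := by
  induction N with
  | zero => simp
  | succ N ih =>
    rw [Finset.sum_range_succ, ih]
    have e1 : ∑ j ∈ range (N + 1), ∑ n ∈ Finset.Ico (j + 1) (N + 1), F n j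
        = ∑ j ∈ range N, ((∑ n ∈ Finset.Ico (j + 1) N, F n j) + F N j) := by
      rw [Finset.sum_range_succ]
      simp only [Finset.Ico_self, Finset.sum_empty, add_zero]
      refine Finset.sum_congr rfl fun j hj => ?_
      exact Finset.sum_Ico_succ_top (by have := Finset.mem_range.mp hj; omega) _
    rw [e1, Finset.sum_add_distrib]

private lemma voc (k r H x : ℕ → ℝ) (ξ : ℝ) (hres : IsResolvent k r)
    (hx0 : x 0 = ξ) (hx : IsVolterraSol k H x) (n : ℕ) :
    x n = r n * ξ + ∑ i ∈ range n, r (n - 1 - i) * H (i + 1) := by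
  induction n using Nat.strong_induction_on with
  | _ n ih =>
    match n with
    | 0 => simpa [hres.1] using hx0
    | (m + 1) =>
      have hsub : ∑ j ∈ range (m + 1), k (m - j) * x j
          = (∑ j ∈ range (m + 1), k (m - j) * r j) * ξ
            + ∑ j ∈ range (m + 1), ∑ i ∈ range j,
                k (m - j) * (r (j - 1 - i) * H (i + 1)) := by
        rw [Finset.sum_mul, ← Finset.sum_add_distrib]
        refine Finset.sum_congr rfl fun j hj => ?_
        rw [ih j (by have := Finset.mem_range.mp hj; omega), mul_add, Finset.mul_sum,
          ← mul_assoc]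
      have hswap : ∑ j ∈ range (m + 1), ∑ i ∈ range j,
              k (m - j) * (r (j - 1 - i) * H (i + 1))
          = ∑ i ∈ range (m + 1),
              (∑ j ∈ Finset.Ico (i + 1) (m + 1), k (m - j) * r (j - 1 - i)) * H (i + 1) := by
        rw [tri_swap']
        refine Finset.sum_congr rfl fun i _ => ?_
        rw [Finset.sum_mul]
        exact Finset.sum_congr rfl fun j _ => by ring
      have hinner : ∀ i ∈ range m,
          (∑ j ∈ Finset.Ico (i + 1) (m + 1), k (m - j) * r (j - 1 - i)) * H (i + 1)
            = r (m - i) * H (i + 1) := by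
        intro i hi
        have him : i < m := Finset.mem_range.mp hi
        congr 1
        rw [Finset.sum_Ico_eq_sum_range,
          show m + 1 - (i + 1) = (m - 1 - i) + 1 from by omega,
          show m - i = (m - 1 - i) + 1 from by omega, hres.2 (m - 1 - i)]
        refine Finset.sum_congr rfl fun t _ => ?_
        congr 1
        · congr 1; omega
        · congr 1; omega
      have eL : ∑ i ∈ range (m + 1),
            (∑ j ∈ Finset.Ico (i + 1) (m + 1), k (m - j) * r (j - 1 - i)) * H (i + 1)
          = ∑ i ∈ range m, r (m - i) * H (i + 1) := by
        rw [Finset.sum_range_succ, Finset.sum_congr rfl hinner]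
        simp
      have eR : ∑ i ∈ range (m + 1), r (m + 1 - 1 - i) * H (i + 1)
          = (∑ i ∈ range m, r (m - i) * H (i + 1)) + H (m + 1) := by
        rw [Finset.sum_range_succ]
        simp [Nat.add_sub_cancel, Nat.sub_self, hres.1]
      rw [hx m, hsub, ← hres.2 m, hswap, eL, eR]
      ring

private lemma phi_scale (φ : ℝ → ℝ) (hφ0 : ∀ t : ℝ, 0 ≤ t → 0 ≤ φ t)
    (hφmono : MonotoneOn φ (Set.Ici 0)) (hφORV : ORegVarying φ)
    (T : ℝ) (hT : 0 < T) :
    ∃ C D : ℝ, 0 ≤ C ∧ 0 ≤ D ∧ ∀ t : ℝ, 0 ≤ t → φ (T * t) ≤ C * φ t + D := by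
  set lam := max T 2 with hlamdef
  have hlam1 : (1 : ℝ) < lam := lt_of_lt_of_le one_lt_two (le_max_right _ _)
  have hlam0 : (0 : ℝ) < lam := by linarith
  have hTlam : T ≤ lam := le_max_left _ _
  by_cases hzero : ∀ t : ℝ, 0 ≤ t → φ t = 0
  · refine ⟨0, 0, le_refl _, le_refl _, fun t ht => ?_⟩
    rw [hzero (T * t) (by positivity)]; norm_num
  push_neg at hzero
  obtain ⟨s, hs0, hsne⟩ := hzero
  have hs : 0 < φ s := lt_of_le_of_ne (hφ0 s hs0) (Ne.symm hsne)
  obtain ⟨C0, hC0l, -⟩ := EReal.exists_between_coe_real (hφORV lam hlam1).2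
  have hev := Filter.eventually_lt_of_limsup_lt hC0l
  rw [Filter.eventually_atTop] at hev
  obtain ⟨t0, ht0⟩ := hev
  set t1 := max t0 (max s 0) with ht1def
  have ht1s : s ≤ t1 := le_trans (le_max_left _ _) (le_max_right _ _)
  have ht10 : (0 : ℝ) ≤ t1 := le_trans (le_max_right _ _) (le_max_right _ _)
  refine ⟨max C0 0, φ (lam * t1), le_max_right _ _, hφ0 _ (by positivity), fun t ht => ?_⟩
  have h1 : φ (T * t) ≤ φ (lam * t) :=
    hφmono (Set.mem_Ici.mpr (by positivity)) (Set.mem_Ici.mpr (by positivity))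
      (mul_le_mul_of_nonneg_right hTlam ht)
  have hD0 : 0 ≤ φ (lam * t1) := hφ0 _ (by positivity)
  rcases le_or_gt t1 t with h | h
  · have hratio : ((φ (lam * t) / φ t : ℝ) : EReal) < (C0 : EReal) :=
      ht0 t (le_trans (le_max_left _ _) h)
    have hratio' : φ (lam * t) / φ t < C0 := by exact_mod_cast hratio
    have hφt : 0 < φ t :=
      lt_of_lt_of_le hs (hφmono (Set.mem_Ici.mpr hs0) (Set.mem_Ici.mpr ht)
        (le_trans ht1s h))
    have h2 : φ (lam * t) < C0 * φ t := (div_lt_iff₀ hφt).mp hratio'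
    have h3 : C0 * φ t ≤ max C0 0 * φ t :=
      mul_le_mul_of_nonneg_right (le_max_left _ _) hφt.le
    linarith
  · have h2 : φ (lam * t) ≤ φ (lam * t1) :=
      hφmono (Set.mem_Ici.mpr (by positivity)) (Set.mem_Ici.mpr (by positivity))
        (mul_le_mul_of_nonneg_left h.le hlam0.le)
    have h3 : 0 ≤ max C0 0 * φ t := mul_nonneg (le_max_right _ _) (hφ0 t ht)
    linarith

private lemma core (a : ℕ → ℝ) (ha0 : ∀ n, 0 ≤ a n) (ha : Summable a)
    (z y : ℕ → ℝ) (b : ℝ) (hb : 0 ≤ b)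
    (hy : ∀ n : ℕ, |y n| ≤ (∑ j ∈ range (n + 1), a (n - j) * |z j|) + b)
    (φ : ℝ → ℝ) (hφ0 : ∀ t : ℝ, 0 ≤ t → 0 ≤ φ t)
    (hφmono : MonotoneOn φ (Set.Ici 0)) (hφconv : ConvexOn ℝ (Set.Ici 0) φ)
    (hφORV : ORegVarying φ)
    (hz : Filter.limsup
        (fun n : ℕ => (((1 / (n : ℝ)) * ∑ j ∈ Finset.range (n + 1), φ |z j| : ℝ) : EReal))
        atTop < ⊤) :
    Filter.limsup
        (fun n : ℕ => (((1 / (n : ℝ)) * ∑ j ∈ Finset.range (n + 1), φ |y j| : ℝ) : EReal))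
        atTop < ⊤ := by
  set S := ∑' n, a n with hSdef
  have hS0 : 0 ≤ S := tsum_nonneg ha0
  set T := S + 1 with hTdef
  have hT0 : (0 : ℝ) < T := by linarith
  have hpart : ∀ s : Finset ℕ, ∑ j ∈ s, a j ≤ S :=
    fun s => Summable.sum_le_tsum s (fun i _ => ha0 i) ha
  obtain ⟨C, D, hC0, hD0, hCD⟩ := phi_scale φ hφ0 hφmono hφORV T hT0
  have hφTb : 0 ≤ φ (T * b) := hφ0 _ (by positivity)
  -- pointwise Jensen bound
  have key : ∀ n : ℕ, φ |y n| ≤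
      (1 / T) * (∑ j ∈ range (n + 1), a (n - j) * φ (T * |z j|)) + φ (T * b) := by
    intro n
    set W := ∑ j ∈ range (n + 1), a (n - j) with hWdef
    have hW0 : 0 ≤ W := Finset.sum_nonneg fun j _ => ha0 _
    have hWS : W ≤ S := by
      have hre := Finset.sum_range_reflect (fun j => a j) (n + 1)
      have : W = ∑ j ∈ range (n + 1), a j := by
        rw [hWdef, ← hre]
        exact Finset.sum_congr rfl fun j _ => by congr 1
      rw [this]; exact hpart _
    set w : ℕ → ℝ := fun j => if j = n + 1 then 1 - W / T else a (n - j) / T with hwdef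
    set p : ℕ → ℝ := fun j => if j = n + 1 then T * b else T * |z j| with hpdef
    have hWT : W / T ≤ 1 := by rw [div_le_one hT0]; linarith
    have hw0 : ∀ j ∈ range (n + 2), 0 ≤ w j := by
      intro j _
      simp only [hwdef]
      split
      · linarith
      · exact div_nonneg (ha0 _) hT0.le
    have hsum_w : ∑ j ∈ range (n + 2), w j = 1 := by
      rw [Finset.sum_range_succ]
      have e : ∑ j ∈ range (n + 1), w j = W / T := by
        rw [hWdef, Finset.sum_div]
        refine Finset.sum_congr rfl fun j hj => ?_
        have hjne : j ≠ n + 1 := by have := Finset.mem_range.mp hj; omega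
        simp only [hwdef, if_neg hjne]
      rw [e]
      simp only [hwdef, if_pos rfl]
      ring
    have hmem : ∀ j ∈ range (n + 2), p j ∈ Set.Ici (0 : ℝ) := by
      intro j _
      simp only [hpdef, Set.mem_Ici]
      split
      · positivity
      · positivity
    have hjen := hφconv.map_sum_le hw0 hsum_w hmem
    have hwp : ∑ j ∈ range (n + 2), w j • p j
        = (∑ j ∈ range (n + 1), a (n - j) * |z j|) + (1 - W / T) * (T * b) := by
      rw [Finset.sum_range_succ]
      congr 1
      · refine Finset.sum_congr rfl fun j hj => ?_
        have hjne : j ≠ n + 1 := by have := Finset.mem_range.mp hj; omega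
        simp only [hwdef, hpdef, if_neg hjne, smul_eq_mul]
        field_simp
      · simp only [hwdef, hpdef, if_pos rfl, smul_eq_mul]
    have hble : b ≤ (1 - W / T) * (T * b) := by
      have e : (1 - W / T) * T = T - W := by field_simp
      have h1 : (1 : ℝ) ≤ (1 - W / T) * T := by rw [e]; rw [hTdef]; linarith
      calc b = 1 * b := (one_mul b).symm
        _ ≤ ((1 - W / T) * T) * b := mul_le_mul_of_nonneg_right h1 hb
        _ = (1 - W / T) * (T * b) := by ring
    have hyle : |y n| ≤ ∑ j ∈ range (n + 2), w j • p j := by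
      rw [hwp]
      have := hy n
      rw [← hWdef] at *
      linarith [hy n]
    have hsnn : (0 : ℝ) ≤ ∑ j ∈ range (n + 2), w j • p j :=
      le_trans (abs_nonneg _) hyle
    have h1 : φ |y n| ≤ φ (∑ j ∈ range (n + 2), w j • p j) :=
      hφmono (Set.mem_Ici.mpr (abs_nonneg _)) (Set.mem_Ici.mpr hsnn) hyle
    have h2 : ∑ j ∈ range (n + 2), w j • φ (p j)
        ≤ (1 / T) * (∑ j ∈ range (n + 1), a (n - j) * φ (T * |z j|)) + φ (T * b) := by
      rw [Finset.sum_range_succ]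
      have e1 : ∑ j ∈ range (n + 1), w j • φ (p j)
          = (1 / T) * ∑ j ∈ range (n + 1), a (n - j) * φ (T * |z j|) := by
        rw [Finset.mul_sum]
        refine Finset.sum_congr rfl fun j hj => ?_
        have hjne : j ≠ n + 1 := by have := Finset.mem_range.mp hj; omega
        simp only [hwdef, hpdef, if_neg hjne, smul_eq_mul]
        ring
      rw [e1]
      have h3 : w (n + 1) • φ (p (n + 1)) ≤ φ (T * b) := by
        simp only [hwdef, hpdef, if_pos rfl, smul_eq_mul]
        nlinarith [div_nonneg hW0 hT0.le]
      linarith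
    exact le_trans h1 (le_trans hjen h2)
  -- summed bound
  have hg0 : ∀ j : ℕ, 0 ≤ φ (T * |z j|) := fun j => hφ0 _ (by positivity)
  have sumbound : ∀ N : ℕ, ∑ n ∈ range (N + 1), φ |y n|
      ≤ C * (∑ j ∈ range (N + 1), φ |z j|) + ((N : ℝ) + 1) * (D + φ (T * b)) := by
    intro N
    have step1 : ∑ n ∈ range (N + 1), φ |y n|
        ≤ (1 / T) * (∑ n ∈ range (N + 1), ∑ j ∈ range (n + 1), a (n - j) * φ (T * |z j|))
          + ((N : ℝ) + 1) * φ (T * b) := by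
      calc ∑ n ∈ range (N + 1), φ |y n|
          ≤ ∑ n ∈ range (N + 1),
              ((1 / T) * (∑ j ∈ range (n + 1), a (n - j) * φ (T * |z j|)) + φ (T * b)) :=
            Finset.sum_le_sum fun n _ => key n
        _ = (1 / T) * (∑ n ∈ range (N + 1), ∑ j ∈ range (n + 1), a (n - j) * φ (T * |z j|))
              + ((N : ℝ) + 1) * φ (T * b) := by
            rw [Finset.sum_add_distrib, ← Finset.mul_sum, Finset.sum_const,
              Finset.card_range, nsmul_eq_mul]
            push_cast
            ring
    have swap : ∑ n ∈ range (N + 1), ∑ j ∈ range (n + 1), a (n - j) * φ (T * |z j|)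
        = ∑ j ∈ range (N + 1), (∑ n ∈ Finset.Ico j (N + 1), a (n - j)) * φ (T * |z j|) := by
      rw [tri_swap]
      exact Finset.sum_congr rfl fun j _ => (Finset.sum_mul _ _ _).symm
    have inner_le : ∀ j : ℕ, (∑ n ∈ Finset.Ico j (N + 1), a (n - j)) ≤ S := by
      intro j
      rw [Finset.sum_Ico_eq_sum_range]
      calc ∑ t ∈ range (N + 1 - j), a (j + t - j)
          = ∑ t ∈ range (N + 1 - j), a t :=
            Finset.sum_congr rfl fun t _ => by congr 1; omega
        _ ≤ S := hpart _
    have hsumg : (0 : ℝ) ≤ ∑ j ∈ range (N + 1), φ (T * |z j|) :=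
      Finset.sum_nonneg fun j _ => hg0 j
    have step2 : (1 / T) * (∑ n ∈ range (N + 1), ∑ j ∈ range (n + 1), a (n - j) * φ (T * |z j|))
        ≤ ∑ j ∈ range (N + 1), φ (T * |z j|) := by
      rw [swap]
      have h1 : ∑ j ∈ range (N + 1), (∑ n ∈ Finset.Ico j (N + 1), a (n - j)) * φ (T * |z j|)
          ≤ ∑ j ∈ range (N + 1), S * φ (T * |z j|) :=
        Finset.sum_le_sum fun j _ => mul_le_mul_of_nonneg_right (inner_le j) (hg0 j)
      rw [← Finset.mul_sum] at h1
      have h2 : (1 / T) * (S * ∑ j ∈ range (N + 1), φ (T * |z j|))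
          ≤ ∑ j ∈ range (N + 1), φ (T * |z j|) := by
        have hST : S / T ≤ 1 := by rw [div_le_one hT0]; linarith
        calc (1 / T) * (S * ∑ j ∈ range (N + 1), φ (T * |z j|))
            = (S / T) * ∑ j ∈ range (N + 1), φ (T * |z j|) := by ring
          _ ≤ 1 * ∑ j ∈ range (N + 1), φ (T * |z j|) :=
              mul_le_mul_of_nonneg_right hST hsumg
          _ = _ := one_mul _
      calc (1 / T) * _ ≤ (1 / T) * (S * ∑ j ∈ range (N + 1), φ (T * |z j|)) :=
            mul_le_mul_of_nonneg_left h1 (by positivity)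
        _ ≤ _ := h2
    have step3 : ∑ j ∈ range (N + 1), φ (T * |z j|)
        ≤ C * (∑ j ∈ range (N + 1), φ |z j|) + ((N : ℝ) + 1) * D := by
      calc ∑ j ∈ range (N + 1), φ (T * |z j|)
          ≤ ∑ j ∈ range (N + 1), (C * φ |z j| + D) :=
            Finset.sum_le_sum fun j _ => hCD _ (abs_nonneg _)
        _ = C * (∑ j ∈ range (N + 1), φ |z j|) + ((N : ℝ) + 1) * D := by
            rw [Finset.sum_add_distrib, ← Finset.mul_sum, Finset.sum_const,
              Finset.card_range, nsmul_eq_mul]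
            push_cast
            ring
    linarith
  -- limsup conclusion
  obtain ⟨M, hMl, -⟩ := EReal.exists_between_coe_real hz
  have hev := Filter.eventually_lt_of_limsup_lt hMl
  rw [Filter.eventually_atTop] at hev
  obtain ⟨N0, hN0⟩ := hev
  set E := D + φ (T * b) with hEdef
  have hE0 : 0 ≤ E := by rw [hEdef]; linarith
  have hbound : ∀ᶠ n : ℕ in atTop,
      (((1 / (n : ℝ)) * ∑ j ∈ Finset.range (n + 1), φ |y j| : ℝ) : EReal)
        ≤ ((C * M + 2 * E : ℝ) : EReal) := by
    rw [Filter.eventually_atTop]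
    refine ⟨max N0 1, fun n hn => ?_⟩
    have hn1 : 1 ≤ n := le_trans (le_max_right _ _) hn
    have hn0 : (0 : ℝ) < (n : ℝ) := by exact_mod_cast Nat.lt_of_lt_of_le Nat.zero_lt_one hn1
    have hzn : (1 / (n : ℝ)) * ∑ j ∈ Finset.range (n + 1), φ |z j| < M := by
      have := hN0 n (le_trans (le_max_left _ _) hn)
      exact_mod_cast this
    rw [EReal.coe_le_coe_iff]
    have hsb := sumbound n
    have hfrac : (1 / (n : ℝ)) * ((n : ℝ) + 1) ≤ 2 := by
      rw [div_mul_eq_mul_div, one_mul, div_le_iff₀ hn0]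
      have h1n : (1:ℝ) ≤ (n:ℝ) := by exact_mod_cast hn1
      linarith
    have hA0 : (0 : ℝ) ≤ ∑ j ∈ Finset.range (n + 1), φ |z j| :=
      Finset.sum_nonneg fun j _ => hφ0 _ (abs_nonneg _)
    calc (1 / (n : ℝ)) * ∑ j ∈ Finset.range (n + 1), φ |y j|
        ≤ (1 / (n : ℝ)) * (C * (∑ j ∈ range (n + 1), φ |z j|) + ((n : ℝ) + 1) * E) :=
          mul_le_mul_of_nonneg_left hsb (by positivity)
      _ = C * ((1 / (n : ℝ)) * ∑ j ∈ range (n + 1), φ |z j|)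
            + ((1 / (n : ℝ)) * ((n : ℝ) + 1)) * E := by ring
      _ ≤ C * M + 2 * E := by
          have h1 : C * ((1 / (n : ℝ)) * ∑ j ∈ range (n + 1), φ |z j|) ≤ C * M :=
            mul_le_mul_of_nonneg_left hzn.le hC0
          have h2 : ((1 / (n : ℝ)) * ((n : ℝ) + 1)) * E ≤ 2 * E :=
            mul_le_mul_of_nonneg_right hfrac hE0
          linarith
  calc Filter.limsup
        (fun n : ℕ => (((1 / (n : ℝ)) * ∑ j ∈ Finset.range (n + 1), φ |y j| : ℝ) : EReal))
        atTop ≤ ((C * M + 2 * E : ℝ) : EReal) := Filter.limsup_le_of_le (by isBoundedDefault) hbound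
    _ < ⊤ := EReal.coe_lt_top _

theorem stmt11 (k r H x : ℕ → ℝ) (ξ : ℝ)
    (hk : Summable fun j => |k j|)
    (hres : IsResolvent k r) (hrs : Summable fun j => |r j|)
    (hx0 : x 0 = ξ) (hx : IsVolterraSol k H x)
    (φ : ℝ → ℝ) (hφ0 : ∀ t : ℝ, 0 ≤ t → 0 ≤ φ t)
    (hφmono : MonotoneOn φ (Set.Ici 0))
    (hφconv : ConvexOn ℝ (Set.Ici 0) φ)
    (hφORV : ORegVarying φ) :
    (Filter.limsup
        (fun n : ℕ =>
          (((1 / (n : ℝ)) * ∑ j ∈ Finset.range (n + 1), φ |x j| : ℝ) : EReal))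
        atTop < ⊤) ↔
    (Filter.limsup
        (fun n : ℕ =>
          (((1 / (n : ℝ)) * ∑ j ∈ Finset.range (n + 1), φ |H j| : ℝ) : EReal))
        atTop < ⊤) := by
  constructor
  · -- x-average finite → H-average finite
    intro hxfin
    set a : ℕ → ℝ := fun m => if m = 0 then 1 else |k (m - 1)| with ha_def
    have ha0 : ∀ n, 0 ≤ a n := by
      intro n
      simp only [ha_def]
      split
      · norm_num
      · exact abs_nonneg _
    have ha : Summable a := by
      have e : (fun n : ℕ => a (n + 1)) = fun n : ℕ => |k n| := by
        funext n
        simp [ha_def]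
      exact (summable_nat_add_iff 1).mp (by rw [e]; exact hk)
    have hy : ∀ n : ℕ, |H n| ≤ (∑ j ∈ range (n + 1), a (n - j) * |x j|) + |H 0| := by
      intro n
      match n with
      | 0 =>
        have h0 : (0 : ℝ) ≤ ∑ j ∈ range 1, a (0 - j) * |x j| :=
          Finset.sum_nonneg fun j _ => mul_nonneg (ha0 _) (abs_nonneg _)
        linarith
      | (m + 1) =>
        have hH : H (m + 1) = x (m + 1) - ∑ j ∈ range (m + 1), k (m - j) * x j := by
          have := hx m; linarith
        have h1 : |H (m + 1)| ≤ |x (m + 1)| + ∑ j ∈ range (m + 1), |k (m - j)| * |x j| := by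
          rw [hH, sub_eq_add_neg]
          refine le_trans (abs_add_le _ _) ?_
          rw [abs_neg]
          refine add_le_add (le_refl _) ?_
          refine le_trans (Finset.abs_sum_le_sum_abs _ _) ?_
          exact le_of_eq (Finset.sum_congr rfl fun j _ => abs_mul _ _)
        have h2 : ∑ j ∈ range (m + 1 + 1), a (m + 1 - j) * |x j|
            = (∑ j ∈ range (m + 1), |k (m - j)| * |x j|) + |x (m + 1)| := by
          rw [Finset.sum_range_succ]
          congr 1
          · refine Finset.sum_congr rfl fun j hj => ?_
            have hj' := Finset.mem_range.mp hj
            have hne : m + 1 - j ≠ 0 := by omega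
            simp only [ha_def, if_neg hne]
            rw [show m + 1 - j - 1 = m - j from by omega]
          · rw [show m + 1 - (m + 1) = 0 from by omega]
            simp [ha_def]
        rw [h2]
        have hH0 : (0:ℝ) ≤ |H 0| := abs_nonneg _
        linarith
    exact core a ha0 ha x H |H 0| (abs_nonneg _) hy φ hφ0 hφmono hφconv hφORV hxfin
  · -- H-average finite → x-average finite
    intro hHfin
    have hrle : ∀ m, |r m| ≤ ∑' i, |r i| := fun m => Summable.le_tsum hrs m (fun j _ => abs_nonneg _)
    have hb0 : (0:ℝ) ≤ (∑' i, |r i|) * |ξ| :=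
      mul_nonneg (tsum_nonneg fun _ => abs_nonneg _) (abs_nonneg _)
    have hy : ∀ n : ℕ, |x n| ≤ (∑ j ∈ range (n + 1), |r (n - j)| * |H j|) + (∑' i, |r i|) * |ξ| := by
      intro n
      have hv := voc k r H x ξ hres hx0 hx n
      have h1 : |x n| ≤ |r n| * |ξ| + ∑ i ∈ range n, |r (n - 1 - i)| * |H (i + 1)| := by
        rw [hv]
        refine le_trans (abs_add_le _ _) ?_
        rw [abs_mul]
        refine add_le_add (le_refl _) ?_
        refine le_trans (Finset.abs_sum_le_sum_abs _ _) ?_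
        exact le_of_eq (Finset.sum_congr rfl fun i _ => abs_mul _ _)
      have h2 : ∑ i ∈ range n, |r (n - 1 - i)| * |H (i + 1)|
          ≤ ∑ j ∈ range (n + 1), |r (n - j)| * |H j| := by
        rw [Finset.sum_range_succ' (fun j => |r (n - j)| * |H j|) n]
        have e : ∑ i ∈ range n, |r (n - (i + 1))| * |H (i + 1)|
            = ∑ i ∈ range n, |r (n - 1 - i)| * |H (i + 1)| :=
          Finset.sum_congr rfl fun i _ => by
            rw [show n - (i + 1) = n - 1 - i from by omega]
        rw [e]
        have h0 : (0:ℝ) ≤ |r (n - 0)| * |H 0| := mul_nonneg (abs_nonneg _) (abs_nonneg _)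
        linarith
      have h3 : |r n| * |ξ| ≤ (∑' i, |r i|) * |ξ| :=
        mul_le_mul_of_nonneg_right (hrle n) (abs_nonneg _)
      linarith
    exact core (fun m => |r m|) (fun m => abs_nonneg _) hrs H x ((∑' i, |r i|) * |ξ|)
      hb0 hy φ hφ0 hφmono hφconv hφORV hHfin
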